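/- Let a>0, b>0, c≥0, g0>0 and let f0, f1 be the MTTP vector fields on ℝ⁴. Then for every x = (x1,x2,x3,x4) ∈ ℝ⁴, the iterated Lie bracket [f1, ad³f0.f1](x) = [f1,[f0,[f0,[f0,f1]]]](x) equals (−a b² cos x3, −a b² sin x3, 0, 0). -/

import Mathlib

set_option maxHeartbeats 1000000


/-- The drift vector field of the MTTP system on ℝ⁴. -/
noncomputable def mttpF0 (a c g0 : ℝ) : (Fin 4 → ℝ) → (Fin 4 → ℝ) :=
  fun x => ![a * Real.cos (x 2) - c * x 0 * x 1,
             a * Real.sin (x 2) + c * (x 0) ^ 2 - g0,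
             x 3 - c * x 0,
             0]

/-- The control vector field of the MTTP system on ℝ⁴. -/
def mttpF1 (b : ℝ) : (Fin 4 → ℝ) → (Fin 4 → ℝ) :=
  fun _ => ![0, 0, 0, b]

/-- Lie bracket of vector fields on ℝ⁴: [f,g](x) = Dg(x)·f(x) − Df(x)·g(x). -/
noncomputable def lieBracket4 (f g : (Fin 4 → ℝ) → (Fin 4 → ℝ)) :
    (Fin 4 → ℝ) → (Fin 4 → ℝ) :=
  fun x => fderiv ℝ g x (f x) - fderiv ℝ f x (g x)

def P (i : Fin 4) : (Fin 4 → ℝ) →L[ℝ] ℝ := ContinuousLinearMap.proj i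

lemma hproj (i : Fin 4) (x : Fin 4 → ℝ) :
    HasFDerivAt (fun x : Fin 4 → ℝ => x i) (P i) x := (P i).hasFDerivAt

lemma hasFDerivAt_vec4 {φ0 φ1 φ2 φ3 : (Fin 4 → ℝ) → ℝ}
    {D0 D1 D2 D3 : (Fin 4 → ℝ) →L[ℝ] ℝ} {x : Fin 4 → ℝ}
    (h0 : HasFDerivAt φ0 D0 x) (h1 : HasFDerivAt φ1 D1 x)
    (h2 : HasFDerivAt φ2 D2 x) (h3 : HasFDerivAt φ3 D3 x) :
    HasFDerivAt (fun x => ![φ0 x, φ1 x, φ2 x, φ3 x])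
      (ContinuousLinearMap.pi ![D0, D1, D2, D3]) x := by
  have : (fun x => ![φ0 x, φ1 x, φ2 x, φ3 x])
      = fun x i => (![φ0, φ1, φ2, φ3] : Fin 4 → (Fin 4 → ℝ) → ℝ) i x := by
    funext x i
    fin_cases i <;> rfl
  rw [this]
  exact (hasFDerivAt_pi (𝕜 := ℝ)).2 (by intro i; fin_cases i <;> simpa)

lemma hF0 (a c g0 : ℝ) (x : Fin 4 → ℝ) :
    HasFDerivAt (mttpF0 a c g0)
      (ContinuousLinearMap.pi
        ![a • ((-Real.sin (x 2)) • P 2) -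
            ((c * x 0) • P 1 + x 1 • (c • P 0)),
          a • (Real.cos (x 2) • P 2) + c • (x 0 • P 0 + x 0 • P 0),
          P 3 - c • P 0,
          0]) x := by
  have h1 : HasFDerivAt (fun x : Fin 4 → ℝ => a * Real.sin (x 2) + c * (x 0) ^ 2 - g0)
      (a • (Real.cos (x 2) • P 2) + c • (x 0 • P 0 + x 0 • P 0)) x := by
    have := ((((hproj 2 x).sin).const_mul a).add
      (((hproj 0 x).mul (hproj 0 x)).const_mul c)).sub_const g0
    simpa [pow_two] using this
  exact hasFDerivAt_vec4
    ((((hproj 2 x).cos).const_mul a).sub (((hproj 0 x).const_mul c).mul (hproj 1 x)))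
    h1
    ((hproj 3 x).sub ((hproj 0 x).const_mul c))
    (hasFDerivAt_const 0 x)

lemma fderivF0_apply (a c g0 : ℝ) (x v : Fin 4 → ℝ) :
    fderiv ℝ (mttpF0 a c g0) x v =
      ![-(a * Real.sin (x 2)) * v 2 - c * (x 0 * v 1 + x 1 * v 0),
        a * Real.cos (x 2) * v 2 + 2 * c * x 0 * v 0,
        v 3 - c * v 0, 0] := by
  rw [(hF0 a c g0 x).fderiv]
  funext i
  fin_cases i <;>
    simp [P, ContinuousLinearMap.pi_apply, ContinuousLinearMap.proj_apply] <;> ring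

lemma e1 (a b c g0 : ℝ) :
    lieBracket4 (mttpF0 a c g0) (mttpF1 b) = fun _ => ![0, 0, -b, 0] := by
  funext x
  have hc1 : fderiv ℝ (mttpF1 b) x = 0 := fderiv_const_apply _
  simp only [lieBracket4, fderivF0_apply, hc1]
  funext i
  fin_cases i <;> simp [mttpF1]

lemma e2 (a b c g0 : ℝ) :
    lieBracket4 (mttpF0 a c g0) (fun _ => ![0, 0, -b, 0]) =
      fun x => ![-(a * b) * Real.sin (x 2), a * b * Real.cos (x 2), 0, 0] := by
  funext x
  simp only [lieBracket4, fderivF0_apply, fderiv_const]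
  funext i
  fin_cases i <;> simp <;> ring

lemma e3 (a b c g0 : ℝ) :
    lieBracket4 (mttpF0 a c g0)
        (fun x => ![-(a * b) * Real.sin (x 2), a * b * Real.cos (x 2), 0, 0]) =
      fun x => ![-(a * b) * x 3 * Real.cos (x 2) + 2 * (a * b * c) * x 0 * Real.cos (x 2)
                   - a * b * c * x 1 * Real.sin (x 2),
                 -(a * b) * x 3 * Real.sin (x 2) + 3 * (a * b * c) * x 0 * Real.sin (x 2),
                 -(a * b * c) * Real.sin (x 2), 0] := by
  funext x
  have hg2 : HasFDerivAt
      (fun x : Fin 4 → ℝ => ![-(a * b) * Real.sin (x 2), a * b * Real.cos (x 2), 0, 0])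
      (ContinuousLinearMap.pi
        ![(-(a * b)) • (Real.cos (x 2) • P 2), (a * b) • ((-Real.sin (x 2)) • P 2), 0, 0]) x :=
    hasFDerivAt_vec4 (((hproj 2 x).sin).const_mul (-(a * b)))
      (((hproj 2 x).cos).const_mul (a * b)) (hasFDerivAt_const 0 x) (hasFDerivAt_const 0 x)
  simp only [lieBracket4, fderivF0_apply, hg2.fderiv]
  funext i
  fin_cases i <;>
    simp [P, mttpF0, ContinuousLinearMap.pi_apply] <;> ring

theorem stmt5 (a b c g0 : ℝ) (ha : 0 < a) (hb : 0 < b) (hc : 0 ≤ c) (hg0 : 0 < g0)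
    (x : Fin 4 → ℝ) :
    lieBracket4 (mttpF1 b)
        (lieBracket4 (mttpF0 a c g0)
          (lieBracket4 (mttpF0 a c g0) (lieBracket4 (mttpF0 a c g0) (mttpF1 b)))) x =
      ![-(a * b ^ 2) * Real.cos (x 2), -(a * b ^ 2) * Real.sin (x 2), 0, 0] := by
  rw [e1, e2, e3]
  have h0 := ((((hproj 3 x).const_mul (-(a * b))).mul ((hproj 2 x).cos)).add
      (((hproj 0 x).const_mul (2 * (a * b * c))).mul ((hproj 2 x).cos))).sub
      ((((hproj 1 x).const_mul (a * b * c))).mul ((hproj 2 x).sin))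
  have h1 := (((hproj 3 x).const_mul (-(a * b))).mul ((hproj 2 x).sin)).add
      (((hproj 0 x).const_mul (3 * (a * b * c))).mul ((hproj 2 x).sin))
  have h2 := ((hproj 2 x).sin).const_mul (-(a * b * c))
  have hg3 := hasFDerivAt_vec4 h0 h1 h2 (hasFDerivAt_const 0 x)
  have hc1 : fderiv ℝ (mttpF1 b) x = 0 := fderiv_const_apply _
  simp only [lieBracket4]
  simp only [Pi.mul_apply, Pi.add_apply, Pi.sub_apply] at hg3
  rw [hg3.fderiv, hc1]
  funext i
  fin_cases i <;>
    simp [P, mttpF1, ContinuousLinearMap.pi_apply] <;> ring
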